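/- For any symmetric positive semidefinite m×m matrix S with eigenvalues γ₁ ≥ … ≥ γ_m and any q < m: inf over rank-≤q matrices Y ∈ ℝ^{m×q} of ‖S − Y Yᵀ‖_F² equals Σ_{i=q+1}^m γ_i², and the infimum over pairs (A, δ) with A ∈ ℝ^{m×q}, δ ≥ 0 of ‖S − A Aᵀ − δ I_m‖_F² is strictly smaller than Σ_{i=q+1}^m γ_i² whenever γ_{q+1} > 0; i.e., the ridge approximation is at least as tight as the best rank-q PSD approximation. -/

import Mathlib

open Matrix Finset

namespace Stmt13Aux

variable {m q : ℕ}

/-- Frobenius norm squared. -/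
noncomputable def frob {n : ℕ} (M : Matrix (Fin n) (Fin n) ℝ) : ℝ := ∑ i, ∑ j, (M i j) ^ 2

lemma frob_eq_trace {n : ℕ} (M : Matrix (Fin n) (Fin n) ℝ) : frob M = Matrix.trace (Mᵀ * M) := by
  unfold frob
  rw [Matrix.trace, Finset.sum_comm]
  simp [Matrix.diag, Matrix.mul_apply, sq]

lemma frob_conj {n : ℕ} (V M : Matrix (Fin n) (Fin n) ℝ) (h1 : Vᵀ * V = 1) :
    frob (Vᵀ * M * V) = frob M := by
  have h2 : V * Vᵀ = 1 := mul_eq_one_comm.mp h1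
  rw [frob_eq_trace, frob_eq_trace]
  have hcan : ∀ X : Matrix (Fin n) (Fin n) ℝ, V * (Vᵀ * X) = X := fun X => by
    rw [← Matrix.mul_assoc, h2, Matrix.one_mul]
  have this1 : (Vᵀ * M * V)ᵀ * (Vᵀ * M * V) = Vᵀ * ((Mᵀ * M) * V) := by
    simp only [Matrix.transpose_mul, Matrix.transpose_transpose, Matrix.mul_assoc]
    rw [hcan]
  rw [this1, ← Matrix.mul_assoc, Matrix.trace_mul_cycle, h2, Matrix.one_mul]

lemma frob_conj' {n : ℕ} (V M : Matrix (Fin n) (Fin n) ℝ) (h1 : Vᵀ * V = 1) :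
    frob (V * M * Vᵀ) = frob M := by
  have h2 : V * Vᵀ = 1 := mul_eq_one_comm.mp h1
  have := frob_conj Vᵀ M (by rwa [Matrix.transpose_transpose])
  rwa [Matrix.transpose_transpose] at this

lemma frob_diagonal {n : ℕ} (w : Fin n → ℝ) : frob (Matrix.diagonal w) = ∑ i, (w i) ^ 2 := by
  unfold frob
  refine Finset.sum_congr rfl fun i _ => ?_
  rw [Finset.sum_eq_single i]
  · simp [Matrix.diagonal_apply_eq]
  · intro j _ hj
    simp [Matrix.diagonal_apply_ne' _ hj]
  · simp


lemma card_tail (hq : q < m) :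
    (Finset.univ.filter (fun j : Fin m => q ≤ (j : ℕ))).card = m - q := by
  have h : (Finset.univ.filter (fun j : Fin m => q ≤ (j : ℕ))) = Finset.Ici (⟨q, hq⟩ : Fin m) := by
    ext j
    simp [Fin.le_def]
  rw [h, Fin.card_Ici]

lemma aux_ineq (hq : q < m) (g d : Fin m → ℝ) (t : ℝ) (ht : 0 ≤ t)
    (hgF : ∀ k : Fin m, q ≤ (k : ℕ) → g k ≤ t)
    (hgFc : ∀ k : Fin m, (k : ℕ) < q → t ≤ g k)
    (hd0 : ∀ k, 0 ≤ d k) (hd1 : ∀ k, d k ≤ 1)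
    (hsum : ((m - q : ℕ) : ℝ) ≤ ∑ k, d k) :
    ∑ k ∈ Finset.univ.filter (fun j : Fin m => q ≤ (j : ℕ)), g k ≤ ∑ k, g k * d k := by
  set F := Finset.univ.filter (fun j : Fin m => q ≤ (j : ℕ)) with hFdef
  have hsplit : ∑ k ∈ F, (g k * d k) + ∑ k ∈ Finset.univ.filter (fun j : Fin m => ¬ q ≤ (j : ℕ)), (g k * d k) = ∑ k, g k * d k :=
    Finset.sum_filter_add_sum_filter_not _ _ _
  have hsplitd : ∑ k ∈ F, d k + ∑ k ∈ Finset.univ.filter (fun j : Fin m => ¬ q ≤ (j : ℕ)), d k = ∑ k, d k :=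
    Finset.sum_filter_add_sum_filter_not _ _ _
  have h1 : ∑ k ∈ F, g k - ∑ k ∈ F, (g k * d k) ≤ t * (((m - q : ℕ) : ℝ) - ∑ k ∈ F, d k) := by
    rw [← Finset.sum_sub_distrib]
    have : ∀ k ∈ F, g k - g k * d k ≤ t * (1 - d k) := by
      intro k hk
      have hk' : q ≤ (k : ℕ) := by simpa [hFdef] using hk
      have := hgF k hk'
      nlinarith [hd0 k, hd1 k]
    calc ∑ k ∈ F, (g k - g k * d k) ≤ ∑ k ∈ F, t * (1 - d k) := Finset.sum_le_sum this
      _ = t * (((m - q : ℕ) : ℝ) - ∑ k ∈ F, d k) := by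
          rw [← Finset.mul_sum, Finset.sum_sub_distrib, Finset.sum_const, card_tail hq]
          simp [nsmul_eq_mul]
  have h2 : t * (((m - q : ℕ) : ℝ) - ∑ k ∈ F, d k)
      ≤ ∑ k ∈ Finset.univ.filter (fun j : Fin m => ¬ q ≤ (j : ℕ)), (g k * d k) := by
    have step1 : t * (((m - q : ℕ) : ℝ) - ∑ k ∈ F, d k)
        ≤ t * ∑ k ∈ Finset.univ.filter (fun j : Fin m => ¬ q ≤ (j : ℕ)), d k := by
      apply mul_le_mul_of_nonneg_left _ ht
      linarith
    refine step1.trans ?_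
    rw [Finset.mul_sum]
    apply Finset.sum_le_sum
    intro k hk
    have hk' : (k : ℕ) < q := by
      simp only [Finset.mem_filter, Finset.mem_univ, true_and, not_le] at hk
      exact hk
    exact mul_le_mul_of_nonneg_right (hgFc k hk') (hd0 k)
  linarith

lemma lower_bound (hq : q < m) (γ : Fin m → ℝ) (hmono : Antitone γ)
    (hnonneg : ∀ i, 0 ≤ γ i) (Y : Matrix (Fin m) (Fin q) ℝ) :
    ∑ j ∈ Finset.univ.filter (fun j : Fin m => q ≤ (j : ℕ)), (γ j) ^ 2
      ≤ frob (Matrix.diagonal γ - Y * Yᵀ) := by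
  classical
  set P : Matrix (Fin m) (Fin m) ℝ := Y * Yᵀ with hPdef
  have hP : P.IsHermitian := by
    rw [Matrix.IsHermitian, Matrix.conjTranspose_eq_transpose_of_trivial, hPdef,
      Matrix.transpose_mul, Matrix.transpose_transpose]
  set V : Matrix (Fin m) (Fin m) ℝ := (hP.eigenvectorUnitary : Matrix (Fin m) (Fin m) ℝ) with hVdef
  set μ : Fin m → ℝ := hP.eigenvalues with hμdef
  have hV1 : Vᵀ * V = 1 := by
    have := Matrix.mem_unitaryGroup_iff'.mp hP.eigenvectorUnitary.2
    rwa [Matrix.star_eq_conjTranspose, Matrix.conjTranspose_eq_transpose_of_trivial] at this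
  have hVV : V * Vᵀ = 1 := mul_eq_one_comm.mp hV1
  have hspec : Vᵀ * P * V = Matrix.diagonal μ := by
    have := hP.conjStarAlgAut_star_eigenvectorUnitary
    rw [Unitary.conjStarAlgAut_star_apply] at this
    rwa [Matrix.star_eq_conjTranspose, Matrix.conjTranspose_eq_transpose_of_trivial,
      RCLike.ofReal_real_eq_id, Function.id_comp] at this
  -- rank bound
  have hrank : Fintype.card {i // μ i ≠ 0} ≤ q := by
    rw [← hP.rank_eq_card_non_zero_eigs, hPdef, Matrix.rank_self_mul_transpose]
    exact Y.rank_le_width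
  set E : Finset (Fin m) := Finset.univ.filter (fun j => μ j = 0) with hEdef
  have hcardE : ((m - q : ℕ) : ℝ) ≤ (E.card : ℝ) := by
    have h1 : E.card + (Finset.univ.filter (fun j => ¬ μ j = 0)).card = m := by
      rw [Finset.card_filter_add_card_filter_not]
      simp
    have h2 : (Finset.univ.filter (fun j : Fin m => ¬ μ j = 0)).card ≤ q := by
      rw [← Fintype.card_subtype]
      exact hrank
    have : m - q ≤ E.card := by omega
    exact_mod_cast this
  set N : Matrix (Fin m) (Fin m) ℝ := Vᵀ * Matrix.diagonal γ * V with hNdef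
  set d : Fin m → ℝ := fun k => ∑ j ∈ E, (V k j) ^ 2 with hddef
  have hcan : ∀ X : Matrix (Fin m) (Fin m) ℝ, V * (Vᵀ * X) = X := fun X => by
    rw [← Matrix.mul_assoc, hVV, Matrix.one_mul]
  -- frob equality
  have hfrob : frob (Matrix.diagonal γ - P) = frob (N - Matrix.diagonal μ) := by
    rw [← frob_conj V (Matrix.diagonal γ - P) hV1]
    congr 1
    rw [Matrix.mul_sub, Matrix.sub_mul, hspec, hNdef]
  have hNtN : ∀ j : Fin m, ∑ i, (N i j) ^ 2 = ∑ k, (γ k) ^ 2 * (V k j) ^ 2 := by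
    intro j
    have hNt : Nᵀ * N = Vᵀ * Matrix.diagonal (fun k => (γ k) ^ 2) * V := by
      rw [hNdef]
      simp only [Matrix.transpose_mul, Matrix.transpose_transpose, Matrix.diagonal_transpose,
        Matrix.mul_assoc]
      rw [hcan, ← Matrix.mul_assoc (Matrix.diagonal γ), Matrix.diagonal_mul_diagonal]
      have hdd : (fun k => γ k * γ k) = fun k => (γ k) ^ 2 :=
        funext fun k => (sq (γ k)).symm
      rw [hdd]
    have lhs_eq : ∑ i, (N i j) ^ 2 = (Nᵀ * N) j j := by
      rw [Matrix.mul_apply]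
      refine Finset.sum_congr rfl fun i _ => ?_
      rw [Matrix.transpose_apply, sq]
    rw [lhs_eq, hNt, Matrix.mul_apply]
    refine Finset.sum_congr rfl fun k _ => ?_
    rw [Matrix.mul_diagonal, Matrix.transpose_apply]
    ring
  have hstepA : ∑ k, (γ k) ^ 2 * d k ≤ frob (N - Matrix.diagonal μ) := by
    have hA1 : ∑ k, (γ k) ^ 2 * d k = ∑ j ∈ E, ∑ i, (N i j) ^ 2 :=
      calc ∑ k, (γ k) ^ 2 * d k = ∑ k, ∑ j ∈ E, (γ k) ^ 2 * (V k j) ^ 2 := by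
            simp [hddef, Finset.mul_sum]
        _ = ∑ j ∈ E, ∑ k, (γ k) ^ 2 * (V k j) ^ 2 := Finset.sum_comm
        _ = ∑ j ∈ E, ∑ i, (N i j) ^ 2 :=
            Finset.sum_congr rfl fun j _ => (hNtN j).symm
    have hA2 : ∑ j ∈ E, ∑ i, (N i j) ^ 2
        = ∑ j ∈ E, ∑ i, ((N - Matrix.diagonal μ) i j) ^ 2 := by
      refine Finset.sum_congr rfl fun j hj => Finset.sum_congr rfl fun i _ => ?_
      have hμj : μ j = 0 := by simpa [hEdef] using hj
      rw [Matrix.sub_apply]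
      congr 1
      rcases eq_or_ne i j with rfl | hij
      · rw [Matrix.diagonal_apply_eq, hμj, sub_zero]
      · rw [Matrix.diagonal_apply_ne _ hij, sub_zero]
    have hA3 : ∑ j ∈ E, ∑ i, ((N - Matrix.diagonal μ) i j) ^ 2
        ≤ frob (N - Matrix.diagonal μ) := by
      have hfr : frob (N - Matrix.diagonal μ)
          = ∑ j : Fin m, ∑ i, ((N - Matrix.diagonal μ) i j) ^ 2 := Finset.sum_comm
      rw [hfr]
      refine Finset.sum_le_sum_of_subset_of_nonneg (Finset.subset_univ E) ?_
      intro j _ _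
      exact Finset.sum_nonneg fun i _ => sq_nonneg _
    rw [hA1, hA2]; exact hA3
  have hrow : ∀ k : Fin m, ∑ j, (V k j) ^ 2 = 1 := by
    intro k
    have : (V * Vᵀ) k k = (1 : Matrix (Fin m) (Fin m) ℝ) k k := by rw [hVV]
    rw [Matrix.mul_apply] at this
    simp only [Matrix.one_apply_eq] at this
    rw [← this]
    exact Finset.sum_congr rfl fun j _ => by rw [Matrix.transpose_apply, sq]
  have hcol : ∀ j : Fin m, ∑ k, (V k j) ^ 2 = 1 := by
    intro j
    have : (Vᵀ * V) j j = (1 : Matrix (Fin m) (Fin m) ℝ) j j := by rw [hV1]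
    rw [Matrix.mul_apply] at this
    simp only [Matrix.one_apply_eq] at this
    rw [← this]
    exact Finset.sum_congr rfl fun k _ => by rw [Matrix.transpose_apply, sq]
  have hd0 : ∀ k, 0 ≤ d k := fun k => Finset.sum_nonneg fun j _ => sq_nonneg _
  have hd1 : ∀ k, d k ≤ 1 := by
    intro k
    rw [hddef, ← hrow k]
    exact Finset.sum_le_sum_of_subset_of_nonneg (Finset.subset_univ E) fun j _ _ => sq_nonneg _
  have hsumd : ((m - q : ℕ) : ℝ) ≤ ∑ k, d k := by
    have : ∑ k, d k = (E.card : ℝ) := by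
      rw [hddef]
      calc ∑ k, ∑ j ∈ E, (V k j) ^ 2 = ∑ j ∈ E, ∑ k, (V k j) ^ 2 := Finset.sum_comm
        _ = ∑ j ∈ E, (1 : ℝ) := Finset.sum_congr rfl fun j _ => hcol j
        _ = (E.card : ℝ) := by rw [Finset.sum_const, nsmul_eq_mul, mul_one]
    rw [this]; exact hcardE
  have haux := aux_ineq hq (fun k => (γ k) ^ 2) d ((γ ⟨q, hq⟩) ^ 2) (sq_nonneg _)
    (fun k hk => by
      have : (⟨q, hq⟩ : Fin m) ≤ k := by rwa [Fin.le_def]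
      exact pow_le_pow_left₀ (hnonneg k) (hmono this) 2)
    (fun k hk => by
      have : k ≤ (⟨q, hq⟩ : Fin m) := by rw [Fin.le_def]; exact Nat.le_of_lt hk
      exact pow_le_pow_left₀ (hnonneg _) (hmono this) 2)
    hd0 hd1 hsumd
  calc ∑ j ∈ Finset.univ.filter (fun j : Fin m => q ≤ (j : ℕ)), (γ j) ^ 2
      ≤ ∑ k, (γ k) ^ 2 * d k := haux
    _ ≤ frob (N - Matrix.diagonal μ) := hstepA
    _ = frob (Matrix.diagonal γ - P) := hfrob.symm

lemma sqrt_mul (_hq : q < m) (w : Fin m → ℝ) (hw : ∀ i : Fin m, (i : ℕ) < q → 0 ≤ w i) :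
    (Matrix.of (fun (i : Fin m) (k : Fin q) => if (i : ℕ) = (k : ℕ) then Real.sqrt (w i) else 0)) *
      (Matrix.of (fun (i : Fin m) (k : Fin q) =>
        if (i : ℕ) = (k : ℕ) then Real.sqrt (w i) else 0))ᵀ
      = Matrix.diagonal (fun i : Fin m => if (i : ℕ) < q then w i else 0) := by
  ext i j
  rw [Matrix.mul_apply]
  rcases eq_or_ne i j with rfl | hij
  · rw [Matrix.diagonal_apply_eq]
    by_cases hi : (i : ℕ) < q
    · rw [Finset.sum_eq_single (⟨(i : ℕ), hi⟩ : Fin q)]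
      · simp only [Matrix.transpose_apply, Matrix.of_apply, if_pos rfl]
        rw [if_pos hi]
        exact Real.mul_self_sqrt (hw i hi)
      · intro k _ hk
        have : ¬ ((i : ℕ) = (k : ℕ)) := fun h => hk (by ext; simp [← h])
        simp [Matrix.of_apply, this]
      · simp
    · rw [if_neg hi]
      apply Finset.sum_eq_zero
      intro k _
      have : ¬ ((i : ℕ) = (k : ℕ)) := fun h => hi (h ▸ k.isLt)
      simp [Matrix.of_apply, this]
  · rw [Matrix.diagonal_apply_ne _ hij]
    apply Finset.sum_eq_zero
    intro k _
    by_cases h1 : (i : ℕ) = (k : ℕ)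
    · have h2 : ¬ ((j : ℕ) = (k : ℕ)) := fun h => hij (Fin.ext (h1.trans h.symm))
      simp [Matrix.of_apply, h2]
    · simp [Matrix.of_apply, h1]

end Stmt13Aux
open Stmt13Aux in
theorem stmt13 {m q : ℕ} (hq : q < m)
    (S U : Matrix (Fin m) (Fin m) ℝ) (γ : Fin m → ℝ)
    (hU : Uᵀ * U = 1) (hS : S = U * Matrix.diagonal γ * Uᵀ)
    (hmono : Antitone γ) (hnonneg : ∀ i, 0 ≤ γ i) :
    (⨅ Y : Matrix (Fin m) (Fin q) ℝ, ∑ i, ∑ j, (((S - Y * Yᵀ : Matrix (Fin m) (Fin m) ℝ) i j)) ^ 2)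
      = ∑ j ∈ Finset.univ.filter (fun j : Fin m => q ≤ (j : ℕ)), (γ j) ^ 2 ∧
    (0 < γ ⟨q, hq⟩ →
      (⨅ p : Matrix (Fin m) (Fin q) ℝ × {x : ℝ // 0 ≤ x},
          ∑ i, ∑ j, (((S - p.1 * p.1ᵀ - (p.2 : ℝ) • (1 : Matrix (Fin m) (Fin m) ℝ)) i j)) ^ 2)
        < ∑ j ∈ Finset.univ.filter (fun j : Fin m => q ≤ (j : ℕ)), (γ j) ^ 2) := by
  classical
  have hUU : U * Uᵀ = 1 := mul_eq_one_comm.mp hU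
  set tail : ℝ := ∑ j ∈ Finset.univ.filter (fun j : Fin m => q ≤ (j : ℕ)), (γ j) ^ 2 with htail
  have hconjS : ∀ X : Matrix (Fin m) (Fin m) ℝ,
      S - U * X * Uᵀ = U * (Matrix.diagonal γ - X) * Uᵀ := by
    intro X
    rw [hS, Matrix.mul_sub, Matrix.sub_mul]
  -- lower bound for all Y
  have hlb : ∀ Y : Matrix (Fin m) (Fin q) ℝ,
      tail ≤ frob (S - Y * Yᵀ) := by
    intro Y
    have hYc : S - Y * Yᵀ = U * (Matrix.diagonal γ - (Uᵀ * Y) * (Uᵀ * Y)ᵀ) * Uᵀ := by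
      rw [← hconjS]
      congr 1
      rw [Matrix.transpose_mul, Matrix.transpose_transpose]
      calc Y * Yᵀ = (U * Uᵀ) * (Y * (Yᵀ * (U * Uᵀ))) := by rw [hUU]; simp
        _ = U * (Uᵀ * Y * (Yᵀ * U)) * Uᵀ := by simp only [Matrix.mul_assoc]
    rw [hYc, frob_conj' U _ hU]
    exact lower_bound hq γ hmono hnonneg (Uᵀ * Y)
  -- the minimizing Y
  set Y0' : Matrix (Fin m) (Fin q) ℝ :=
    Matrix.of (fun (i : Fin m) (k : Fin q) => if (i : ℕ) = (k : ℕ) then Real.sqrt (γ i) else 0)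
    with hY0'def
  have hY0' : Y0' * Y0'ᵀ = Matrix.diagonal (fun i : Fin m => if (i : ℕ) < q then γ i else 0) :=
    sqrt_mul hq γ (fun i _ => hnonneg i)
  have hY0val : frob (S - (U * Y0') * (U * Y0')ᵀ) = tail := by
    have h1 : (U * Y0') * (U * Y0')ᵀ = U * (Y0' * Y0'ᵀ) * Uᵀ := by
      rw [Matrix.transpose_mul]; simp only [Matrix.mul_assoc]
    rw [h1, hconjS, frob_conj' U _ hU, hY0', Matrix.diagonal_sub, frob_diagonal, htail,
      Finset.sum_filter]
    refine Finset.sum_congr rfl fun i _ => ?_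
    by_cases hi : (i : ℕ) < q
    · rw [if_pos hi, if_neg (by omega : ¬ q ≤ (i : ℕ))]
      ring
    · rw [if_neg hi, if_pos (by omega : q ≤ (i : ℕ))]
      ring
  constructor
  · -- part 1
    refine le_antisymm ?_ ?_
    · have := ciInf_le (f := fun Y : Matrix (Fin m) (Fin q) ℝ => frob (S - Y * Yᵀ))
        ⟨tail, by rintro x ⟨Y, rfl⟩; exact hlb Y⟩ (U * Y0')
      rw [hY0val] at this
      exact this
    · exact le_ciInf hlb
  · -- part 2
    intro ht
    set t : ℝ := γ ⟨q, hq⟩ with htdef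
    have hmq : (0 : ℝ) < ((m - q : ℕ) : ℝ) := by
      have : 0 < m - q := by omega
      exact_mod_cast this
    set δ : ℝ := t / ((m - q : ℕ) : ℝ) with hδdef
    have hδpos : 0 < δ := div_pos ht hmq
    have hδt : ((m - q : ℕ) : ℝ) * δ = t := by
      rw [hδdef, mul_div_cancel₀ _ hmq.ne']
    have hδle : δ ≤ t := by
      rw [hδdef]
      apply div_le_self ht.le
      have : 1 ≤ m - q := by omega
      exact_mod_cast this
    set A' : Matrix (Fin m) (Fin q) ℝ :=
      Matrix.of (fun (i : Fin m) (k : Fin q) =>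
        if (i : ℕ) = (k : ℕ) then Real.sqrt (γ i - δ) else 0) with hA'def
    have hwnn : ∀ i : Fin m, (i : ℕ) < q → 0 ≤ γ i - δ := by
      intro i hi
      have h1 : i ≤ (⟨q, hq⟩ : Fin m) := by rw [Fin.le_def]; exact Nat.le_of_lt hi
      have h2 : t ≤ γ i := hmono h1
      linarith
    have hA' : A' * A'ᵀ
        = Matrix.diagonal (fun i : Fin m => if (i : ℕ) < q then γ i - δ else 0) :=
      sqrt_mul hq (fun i => γ i - δ) hwnn
    -- value at the ridge point
    have hval : frob (S - (U * A') * (U * A')ᵀ - δ • (1 : Matrix (Fin m) (Fin m) ℝ))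
        = ∑ j ∈ Finset.univ.filter (fun j : Fin m => q ≤ (j : ℕ)), (γ j - δ) ^ 2 := by
      have h1 : (U * A') * (U * A')ᵀ = U * (A' * A'ᵀ) * Uᵀ := by
        rw [Matrix.transpose_mul]; simp only [Matrix.mul_assoc]
      have h2 : δ • (1 : Matrix (Fin m) (Fin m) ℝ)
          = U * (δ • (1 : Matrix (Fin m) (Fin m) ℝ)) * Uᵀ := by
        rw [Matrix.mul_smul, Matrix.mul_one, Matrix.smul_mul, hUU]
      rw [h1]
      conv_lhs => rw [h2]
      have h3 : S - U * (A' * A'ᵀ) * Uᵀ - U * (δ • (1 : Matrix (Fin m) (Fin m) ℝ)) * Uᵀ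
          = U * (Matrix.diagonal γ - A' * A'ᵀ - δ • (1 : Matrix (Fin m) (Fin m) ℝ)) * Uᵀ := by
        rw [hS, Matrix.mul_sub, Matrix.sub_mul, Matrix.mul_sub, Matrix.sub_mul]
      rw [h3, frob_conj' U _ hU, hA', Matrix.smul_one_eq_diagonal, Matrix.diagonal_sub,
        Matrix.diagonal_sub, frob_diagonal, Finset.sum_filter]
      refine Finset.sum_congr rfl fun i _ => ?_
      by_cases hi : (i : ℕ) < q
      · rw [if_pos hi, if_neg (by omega : ¬ q ≤ (i : ℕ))]
        ring
      · rw [if_neg hi, if_pos (by omega : q ≤ (i : ℕ))]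
        ring
    -- strict inequality of sums
    have hstrict : ∑ j ∈ Finset.univ.filter (fun j : Fin m => q ≤ (j : ℕ)), (γ j - δ) ^ 2
        < tail := by
      set F := Finset.univ.filter (fun j : Fin m => q ≤ (j : ℕ)) with hFdef
      have hmemF : (⟨q, hq⟩ : Fin m) ∈ F := by simp [hFdef]
      have hT : t ≤ ∑ j ∈ F, γ j :=
        Finset.single_le_sum (fun j _ => hnonneg j) hmemF
      have hexp : ∑ j ∈ F, (γ j - δ) ^ 2
          = ∑ j ∈ F, (γ j) ^ 2 - 2 * δ * (∑ j ∈ F, γ j) + ((m - q : ℕ) : ℝ) * δ ^ 2 := by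
        have : ∀ j ∈ F, (γ j - δ) ^ 2 = (γ j) ^ 2 - 2 * δ * γ j + δ ^ 2 :=
          fun j _ => by ring
        rw [Finset.sum_congr rfl this, Finset.sum_add_distrib, Finset.sum_sub_distrib,
          Finset.sum_const, card_tail hq, ← Finset.mul_sum, nsmul_eq_mul]
      rw [hexp, htail]
      nlinarith [hδpos, ht, hT, hδt]
    have hinf : (⨅ p : Matrix (Fin m) (Fin q) ℝ × {x : ℝ // 0 ≤ x},
        frob (S - p.1 * p.1ᵀ - (p.2 : ℝ) • (1 : Matrix (Fin m) (Fin m) ℝ)))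
        ≤ ∑ j ∈ Finset.univ.filter (fun j : Fin m => q ≤ (j : ℕ)), (γ j - δ) ^ 2 := by
      rw [← hval]
      refine ciInf_le (f := fun p : Matrix (Fin m) (Fin q) ℝ × {x : ℝ // 0 ≤ x} =>
        frob (S - p.1 * p.1ᵀ - (p.2 : ℝ) • (1 : Matrix (Fin m) (Fin m) ℝ))) ?_
        ((U * A'), ⟨δ, hδpos.le⟩)
      refine ⟨0, ?_⟩
      rintro x ⟨p, rfl⟩
      exact Finset.sum_nonneg (fun i _ => Finset.sum_nonneg (fun j _ => sq_nonneg _))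
    exact lt_of_le_of_lt hinf hstrict
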